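/- For all 0 < γ, ε₁, ε₂ < 1/48, there exist an integer m > 0 and real numbers 0 ≤ p₁, p₂, …, p_{2m}, q₁, …, q_{2m} ≤ 1 such that the following four conditions hold: (1) for all 0 ≤ t ≤ 2m−1, Σ_{i=1}^{2m} p_i^t = Σ_{i=1}^{2m} q_i^t; (2) p₁ ≤ p₂ ≤ … ≤ p_m < γ(1−2ε₁) < γ(1+2ε₁) < p_{m+1} ≤ … ≤ p_{2m}; (3) q₁ ≤ q₂ ≤ … ≤ q_{m−1} < q_m = q_{m+1} = γ(1+2ε₁) < q_{m+2} ≤ … ≤ q_{2m}; and (4) 1/(4ε₂) ≥ m ≥ 1/(8·max(2ε₁, ε₂)) + 1. -/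

import Mathlib

open Finset Real

open Finset

private lemma sum_pair_shift (f : ℕ → ℝ) (n : ℕ) :
    ∑ i ∈ Icc 1 (2*n), f ((i+1)/2) = 2 * ∑ k ∈ Icc 1 n, f k := by
  induction n with
  | zero => simp
  | succ n ih =>
    have h1 : 2*(n+1) = (2*n+1)+1 := by ring
    rw [h1, Finset.sum_Icc_succ_top (by omega), Finset.sum_Icc_succ_top (by omega),
      Finset.sum_Icc_succ_top (by omega), ih]
    have e1 : (2*n+1+1+1)/2 = n+1 := by omega
    have e2 : (2*n+1+1)/2 = n+1 := by omega
    rw [e1, e2]; ring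

private lemma sum_pair_shift' (f : ℕ → ℝ) (n : ℕ) (hn : 1 ≤ n) :
    ∑ i ∈ Icc 1 (2*n), f (i/2) = f 0 + f n + 2 * ∑ k ∈ Icc 1 (n-1), f k := by
  induction n, hn using Nat.le_induction with
  | base => norm_num [Finset.sum_Icc_succ_top, show (2:ℕ)*1 = 1+1 by norm_num]
  | succ n hn ih =>
    have h1 : 2*(n+1) = (2*n+1)+1 := by ring
    rw [h1, Finset.sum_Icc_succ_top (by omega), Finset.sum_Icc_succ_top (by omega), ih]
    have e1 : (2*n+1+1)/2 = n+1 := by omega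
    have e2 : (2*n+1)/2 = n := by omega
    have e3 : n+1-1 = (n-1)+1 := by omega
    rw [e1, e2, e3, Finset.sum_Icc_succ_top (by omega)]
    have e4 : n - 1 + 1 = n := by omega
    rw [e4]; ring

private lemma sum_range_even_odd (g : ℕ → ℝ) (n : ℕ) :
    ∑ j ∈ range (2*n+1), g j = ∑ k ∈ range (n+1), g (2*k) + ∑ k ∈ range n, g (2*k+1) := by
  induction n with
  | zero => simp
  | succ n ih =>
    have h1 : 2*(n+1)+1 = (2*n+1)+1+1 := by ring
    rw [h1, Finset.sum_range_succ, Finset.sum_range_succ,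
      Finset.sum_range_succ (fun k => g (2*k)), Finset.sum_range_succ (fun k => g (2*k+1)), ih]
    have e1 : 2*n+1+1 = 2*(n+1) := by ring
    rw [e1]; ring

private lemma two_cos_pow (φ : ℝ) (n : ℕ) :
    (2 * Real.cos φ)^n
      = ∑ s ∈ range (n+1), (n.choose s : ℝ) * Real.cos ((2*(s:ℝ) - n) * φ) := by
  have key : (((2 * Real.cos φ : ℝ) : ℂ))^n
      = ∑ s ∈ range (n+1), (((n.choose s : ℝ) : ℂ))
          * Complex.exp ((((2*(s:ℝ) - n) * φ : ℝ) : ℂ) * Complex.I) := by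
    have h2 : ((2 * Real.cos φ : ℝ) : ℂ) = Complex.exp (φ * Complex.I) + Complex.exp (-φ * Complex.I) := by
      push_cast [Complex.ofReal_cos]
      exact Complex.two_cos (φ : ℂ)
    rw [h2, add_pow]
    refine Finset.sum_congr rfl fun s hs => ?_
    have hsn : s ≤ n := by simpa using Nat.lt_succ_iff.mp (Finset.mem_range.mp hs)
    rw [← Complex.exp_nat_mul, ← Complex.exp_nat_mul, ← Complex.exp_add]
    have harg : (s : ℂ) * ((φ:ℂ) * Complex.I) + (n - s : ℕ) * ((-φ:ℂ) * Complex.I)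
        = (((2*(s:ℝ) - n) * φ : ℝ) : ℂ) * Complex.I := by
      have : ((n - s : ℕ) : ℂ) = (n : ℂ) - s := by
        push_cast [Nat.cast_sub hsn]; ring
      rw [this]; push_cast; ring
    rw [harg]; push_cast; ring
  have h3 := congrArg Complex.re key
  rw [Complex.re_sum] at h3
  have h4 : ∀ s ∈ range (n+1),
      ((((n.choose s : ℝ) : ℂ)) * Complex.exp ((((2*(s:ℝ) - n) * φ : ℝ) : ℂ) * Complex.I)).re
      = (n.choose s : ℝ) * Real.cos ((2*(s:ℝ) - n) * φ) := by
    intro s _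
    rw [Complex.re_ofReal_mul, Complex.exp_ofReal_mul_I_re]
  rw [Finset.sum_congr rfl h4] at h3
  rw [← h3, ← Complex.ofReal_pow, Complex.ofReal_re]

private lemma alt_cos_sum (m : ℕ) (hm : 0 < m) (ν : ℤ) (hν : |ν| < 2*(m:ℤ)) :
    ∑ j ∈ range (2*m+1), ((-1:ℝ)^j * (if j = 0 ∨ j = 2*m then (1:ℝ) else 2))
        * Real.cos ((ν:ℝ) * (j * (π/(2*m)))) = 0 := by
  have hmR : (0:ℝ) < (m:ℝ) := by exact_mod_cast hm
  set θ : ℝ := (ν:ℝ) * π / (2*m) with hθ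
  have hangle : ∀ j : ℕ, (ν:ℝ) * ((j:ℝ) * (π/(2*m))) = (j:ℝ) * θ := by
    intro j; rw [hθ]; field_simp
  set z : ℂ := -Complex.exp (θ * Complex.I) with hzdef
  have hzj : ∀ j : ℕ, (z^j).re = (-1:ℝ)^j * Real.cos ((j:ℝ)*θ) := by
    intro j
    have h : z^j = ((((-1:ℝ))^j : ℝ) : ℂ) * Complex.exp ((((j:ℝ)*θ : ℝ)) * Complex.I) := by
      rw [hzdef, neg_pow, ← Complex.exp_nat_mul]
      push_cast; ring_nf
    rw [h, Complex.re_ofReal_mul, Complex.exp_ofReal_mul_I_re]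
  have hz0 : z ≠ 0 := by
    rw [hzdef]; simp [Complex.exp_ne_zero]
  have hz1 : z ≠ 1 := by
    intro h
    have he : Complex.exp ((θ - π) * Complex.I) = 1 := by
      push_cast [sub_mul, Complex.exp_sub, Complex.exp_pi_mul_I]
      rw [hzdef] at h
      have h2 : Complex.exp (↑θ * Complex.I) = -1 := by linear_combination -h
      rw [h2]; norm_num
    rw [Complex.exp_eq_one_iff] at he
    obtain ⟨k, hk⟩ := he
    have hk' : ((θ - π : ℝ) : ℂ) * Complex.I = (((2*π*(k:ℝ)) : ℝ) : ℂ) * Complex.I := by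
      push_cast; push_cast at hk; linear_combination hk
    have hk2 : θ - π = 2*π*(k:ℝ) := by
      exact_mod_cast mul_right_cancel₀ Complex.I_ne_zero hk'
    have h5 : (ν:ℝ) * π / (2*m) = 2*π*(k:ℝ) + π := by rw [← hθ]; linarith
    have h6 : (ν:ℝ) * π = (2*π*(k:ℝ) + π) * (2*m) := by
      exact (div_eq_iff (by positivity)).mp h5
    have h7 : (ν:ℝ) * π = (2*(m:ℝ)*(2*(k:ℝ)+1)) * π := by linear_combination h6
    have h8 : (ν:ℝ) = 2*(m:ℝ)*(2*(k:ℝ)+1) := mul_right_cancel₀ Real.pi_ne_zero h7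
    have h9 : ν = 2*(m:ℤ)*(2*k+1) := by exact_mod_cast h8
    have habs : |ν| = 2*(m:ℤ)*|2*k+1| := by
      rw [h9, abs_mul]
      congr 1
      exact abs_of_nonneg (by positivity)
    have h10 : (1:ℤ) ≤ |2*k+1| := Int.one_le_abs (by omega)
    have h11 : 2*(m:ℤ) ≤ |ν| := by
      rw [habs]
      nlinarith [Int.natCast_pos.mpr hm]
    omega
  -- z^(2m) = (-1)^ν
  have hr : (2*(m:ℝ)) * θ = (ν:ℝ) * π := by rw [hθ]; field_simp
  have h2m : z^(2*m) = (-1:ℂ)^ν := by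
    rw [hzdef, neg_pow]
    have he : Even (2*m) := ⟨m, by ring⟩
    rw [he.neg_one_pow, one_mul, ← Complex.exp_nat_mul]
    have harg : ((2*m : ℕ):ℂ) * (↑θ * Complex.I) = (ν:ℂ) * (↑π * Complex.I) := by
      have h := congrArg (fun r : ℝ => (r:ℂ) * Complex.I) hr
      push_cast at h ⊢
      linear_combination h
    rw [harg, Complex.exp_int_mul, Complex.exp_pi_mul_I]
  have hpow : z^(2*m+1) = (-1:ℂ)^ν * z := by rw [pow_succ, h2m]
  have hgeom : ∑ j ∈ range (2*m+1), z^j = ((-1:ℂ)^ν * z - 1)/(z-1) := by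
    rw [geom_sum_eq hz1, hpow]
  have hre : (∑ j ∈ range (2*m+1), z^j).re
      = ∑ j ∈ range (2*m+1), (-1:ℝ)^j * Real.cos ((j:ℝ)*θ) := by
    rw [Complex.re_sum]
    exact Finset.sum_congr rfl fun j _ => hzj j
  -- weighted sum reduction
  have hw : ∑ j ∈ range (2*m+1), ((-1:ℝ)^j * (if j = 0 ∨ j = 2*m then (1:ℝ) else 2))
        * Real.cos ((ν:ℝ) * (j * (π/(2*m))))
      = 2 * (∑ j ∈ range (2*m+1), (-1:ℝ)^j * Real.cos ((j:ℝ)*θ))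
        - 1 - Real.cos ((2*(m:ℝ))*θ) := by
    have hsplit : ∀ j ∈ range (2*m+1),
        ((-1:ℝ)^j * (if j = 0 ∨ j = 2*m then (1:ℝ) else 2)) * Real.cos ((ν:ℝ) * (j * (π/(2*m))))
        = 2 * ((-1:ℝ)^j * Real.cos ((j:ℝ)*θ))
          - (if j = 0 then (-1:ℝ)^j * Real.cos ((j:ℝ)*θ) else 0)
          - (if j = 2*m then (-1:ℝ)^j * Real.cos ((j:ℝ)*θ) else 0) := by
      intro j _
      rw [hangle j]
      by_cases hj0 : j = 0
      · subst hj0; simp [hm.ne']; norm_num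
      · by_cases hj2 : j = 2*m
        · subst hj2; simp [hj0]; ring
        · simp [hj0, hj2]; ring
    rw [Finset.sum_congr rfl hsplit, Finset.sum_sub_distrib, Finset.sum_sub_distrib,
      Finset.sum_ite_eq' (range (2*m+1)) 0, Finset.sum_ite_eq' (range (2*m+1)) (2*m),
      ← Finset.mul_sum]
    have h0mem : (0:ℕ) ∈ range (2*m+1) := by simp
    have h2mem : 2*m ∈ range (2*m+1) := by simp
    rw [if_pos h0mem, if_pos h2mem]
    have he : Even (2*m) := ⟨m, by ring⟩
    rw [he.neg_one_pow]
    push_cast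
    norm_num
  rw [hw, ← hre, hgeom]
  have hcos2m : Real.cos ((2*(m:ℝ))*θ) = ((-1:ℂ)^ν).re := by
    rw [hr, ← Complex.exp_ofReal_mul_I_re]
    congr 1
    rw [show (((ν:ℝ)*π : ℝ):ℂ) * Complex.I = (ν:ℂ)*(↑π*Complex.I) by push_cast; ring,
      Complex.exp_int_mul, Complex.exp_pi_mul_I]
  rw [hcos2m]
  rcases Int.even_or_odd ν with hev | hod
  · rw [hev.neg_one_zpow]
    rw [one_mul, div_self (sub_ne_zero.mpr hz1)]
    norm_num
  · rw [hod.neg_one_zpow]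
    set S : ℂ := (-1 * z - 1)/(z-1) with hS
    have hconjz : (starRingEnd ℂ) z = z⁻¹ := by
      rw [hzdef]
      rw [map_neg, ← Complex.exp_conj]
      have : (starRingEnd ℂ) (↑θ * Complex.I) = -(↑θ * Complex.I) := by
        rw [map_mul, Complex.conj_I, Complex.conj_ofReal]; ring
      rw [this, ← neg_inv, Complex.exp_neg]
    have hzinv1 : z⁻¹ - 1 ≠ 0 :=
      sub_ne_zero.mpr (fun h => hz1 (inv_eq_one.mp h))
    have hconjS : (starRingEnd ℂ) S = -S := by
      rw [hS, map_div₀, map_sub, map_one, map_mul, map_neg, map_one, hconjz,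
        map_sub, map_one, hconjz, ← neg_div]
      rw [div_eq_div_iff hzinv1 (sub_ne_zero.mpr hz1)]
      field_simp
      ring
    have hre0 : S.re = 0 := by
      have h := Complex.add_conj S
      rw [hconjS] at h
      norm_num at h
      exact h
    norm_num [hre0, Complex.neg_re, Complex.one_re]
private lemma key_sum (m : ℕ) (hm : 0 < m) (a : ℝ) (t : ℕ) (ht : t ≤ 2*m - 1) :
    ∑ j ∈ range (2*m+1), ((-1:ℝ)^j * (if j = 0 ∨ j = 2*m then (1:ℝ) else 2))
        * (2*a*(Real.cos ((j:ℝ)*π/(4*(m:ℝ))))^2)^t = 0 := by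
  have hmR : (0:ℝ) < (m:ℝ) := by exact_mod_cast hm
  set w : ℕ → ℝ := fun j => (-1:ℝ)^j * (if j = 0 ∨ j = 2*m then (1:ℝ) else 2) with hw
  have hang : ∀ s j : ℕ, (2*(s:ℝ) - ((2*t:ℕ):ℝ)) * ((j:ℝ)*π/(4*(m:ℝ)))
      = ((((s:ℤ) - t : ℤ)):ℝ) * ((j:ℝ) * (π/(2*(m:ℝ)))) := by
    intro s j
    push_cast
    field_simp
    ring
  have hY : ∀ j : ℕ, (2*a*(Real.cos ((j:ℝ)*π/(4*(m:ℝ))))^2)^t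
      = (a/2)^t * (2*Real.cos ((j:ℝ)*π/(4*(m:ℝ))))^(2*t) := by
    intro j
    rw [pow_mul, ← mul_pow]
    congr 1
    ring
  have expand : ∀ j ∈ range (2*m+1),
      w j * (2*a*(Real.cos ((j:ℝ)*π/(4*(m:ℝ))))^2)^t
      = ∑ s ∈ range (2*t+1), ((a/2)^t * ((2*t).choose s : ℝ))
          * (w j * Real.cos (((((s:ℤ) - t : ℤ)):ℝ) * ((j:ℝ) * (π/(2*(m:ℝ)))))) := by
    intro j _
    rw [hY j, two_cos_pow, Finset.mul_sum, Finset.mul_sum]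
    refine Finset.sum_congr rfl fun s _ => ?_
    rw [hang s j]
    ring
  rw [Finset.sum_congr rfl expand, Finset.sum_comm]
  refine Finset.sum_eq_zero fun s hs => ?_
  rw [← Finset.mul_sum]
  have hν : |(s:ℤ) - t| < 2*(m:ℤ) := by
    have hs' : s < 2*t + 1 := Finset.mem_range.mp hs
    rw [abs_sub_lt_iff]
    omega
  rw [alt_cos_sum m hm ((s:ℤ) - t) hν, mul_zero]


private lemma range_succ_split (F : ℕ → ℝ) (n : ℕ) (hn : 1 ≤ n) :
    ∑ k ∈ range (n+1), F k = F 0 + F n + ∑ k ∈ Icc 1 (n-1), F k := by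
  induction n, hn using Nat.le_induction with
  | base => simp [Finset.sum_range_succ]
  | succ n hn ih =>
    rw [Finset.sum_range_succ, ih]
    have h1 : n + 1 - 1 = (n-1) + 1 := by omega
    rw [h1, Finset.sum_Icc_succ_top (by omega)]
    have h2 : n - 1 + 1 = n := by omega
    rw [h2]; ring

private lemma weighted_even_sum (F : ℕ → ℝ) (n : ℕ) (hn : 1 ≤ n) :
    ∑ k ∈ range (n+1), (if k = 0 ∨ k = n then (1:ℝ) else 2) * F k
      = F 0 + F n + 2 * ∑ k ∈ Icc 1 (n-1), F k := by
  have hsplit : ∀ k ∈ range (n+1),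
      (if k = 0 ∨ k = n then (1:ℝ) else 2) * F k
      = 2 * F k - (if k = 0 then F k else 0) - (if k = n then F k else 0) := by
    intro k _
    by_cases h0 : k = 0
    · subst h0
      have h2 : ¬ ((0:ℕ) = n) := by omega
      simp [h2]
      ring
    · by_cases h1 : k = n
      · subst h1; simp [h0]; ring
      · simp [h0, h1]
  rw [Finset.sum_congr rfl hsplit, Finset.sum_sub_distrib, Finset.sum_sub_distrib,
    Finset.sum_ite_eq' (range (n+1)) 0, Finset.sum_ite_eq' (range (n+1)) n,
    ← Finset.mul_sum]
  rw [if_pos (by simp : (0:ℕ) ∈ range (n+1)), if_pos (by simp [Nat.lt_succ_iff] : n ∈ range (n+1))]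
  rw [range_succ_split F n hn]
  ring

private lemma sum_Icc_reflect (H : ℕ → ℝ) (n : ℕ) :
    ∑ k ∈ Icc 1 n, H (n+1-k) = ∑ k ∈ Icc 1 n, H k := by
  refine Finset.sum_nbij' (fun k => n+1-k) (fun k => n+1-k) ?_ ?_ ?_ ?_ ?_ <;>
    intros a ha <;> simp only [Finset.mem_Icc] at * <;> omega

private lemma sum_Icc_to_range (H : ℕ → ℝ) (n : ℕ) :
    ∑ k ∈ Icc 1 n, H (n-k) = ∑ k ∈ range n, H k := by
  refine Finset.sum_nbij' (fun k => n-k) (fun k => n-k) ?_ ?_ ?_ ?_ ?_ <;>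
    intros a ha <;> simp only [Finset.mem_Icc, Finset.mem_range] at * <;> omega


set_option maxHeartbeats 2000000 in


/-- Existence of the two interleaved root families `p₁,…,p_{2m}` and `q₁,…,q_{2m}` with
matching power sums (Lemma `get_the_roots`). Indices run over `1 ≤ i ≤ 2m`. -/
theorem get_the_roots
    (γ ε₁ ε₂ : ℝ)
    (hγ : 0 < γ) (hγ' : γ < 1 / 48)
    (hε₁ : 0 < ε₁) (hε₁' : ε₁ < 1 / 48)
    (hε₂ : 0 < ε₂) (hε₂' : ε₂ < 1 / 48) :
    ∃ (m : ℕ) (p q : ℕ → ℝ), 0 < m ∧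
      -- the numbers all lie in [0, 1]
      (∀ i, 1 ≤ i → i ≤ 2 * m → 0 ≤ p i ∧ p i ≤ 1 ∧ 0 ≤ q i ∧ q i ≤ 1) ∧
      -- (1) matching power sums for all 0 ≤ t ≤ 2m − 1
      (∀ t : ℕ, t ≤ 2 * m - 1 →
        ∑ i ∈ Finset.Icc 1 (2 * m), p i ^ t = ∑ i ∈ Finset.Icc 1 (2 * m), q i ^ t) ∧
      -- (2) p₁ ≤ … ≤ p_m < γ(1−2ε₁) < γ(1+2ε₁) < p_{m+1} ≤ … ≤ p_{2m}
      (∀ i j, 1 ≤ i → i ≤ j → j ≤ 2 * m → p i ≤ p j) ∧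
      p m < γ * (1 - 2 * ε₁) ∧ γ * (1 + 2 * ε₁) < p (m + 1) ∧
      -- (3) q₁ ≤ … ≤ q_{m−1} < q_m = q_{m+1} = γ(1+2ε₁) < q_{m+2} ≤ … ≤ q_{2m}
      (∀ i j, 1 ≤ i → i ≤ j → j ≤ 2 * m → q i ≤ q j) ∧
      q (m - 1) < γ * (1 + 2 * ε₁) ∧
      q m = γ * (1 + 2 * ε₁) ∧ q (m + 1) = γ * (1 + 2 * ε₁) ∧
      γ * (1 + 2 * ε₁) < q (m + 2) ∧
      -- (4) 1/(4ε₂) ≥ m ≥ 1/(8 max(2ε₁, ε₂)) + 1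
      (m : ℝ) ≤ 1 / (4 * ε₂) ∧ 1 / (8 * max (2 * ε₁) ε₂) + 1 ≤ (m : ℝ) := by
  obtain ⟨M, hMdef⟩ : ∃ M : ℝ, M = max (2*ε₁) ε₂ := ⟨_, rfl⟩
  have hMdef' : max (2*ε₁) ε₂ = M := hMdef.symm
  have hM1 : 2*ε₁ ≤ M := hMdef ▸ le_max_left _ _
  have hM2 : ε₂ ≤ M := hMdef ▸ le_max_right _ _
  have hM0 : 0 < M := lt_of_lt_of_le hε₂ hM2
  have hM24 : M < 1/24 := hMdef ▸ max_lt (by linarith) (by linarith)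
  obtain ⟨u, hudef⟩ : ∃ u : ℝ, u = 1/(8*M) + 1 := ⟨_, rfl⟩
  have hu4 : 4 ≤ u := by
    have h3 : (3:ℝ) < 1/(8*M) := by
      rw [lt_div_iff₀ (by positivity)]
      nlinarith
    rw [hudef]; linarith
  obtain ⟨k, hkdef⟩ : ∃ k : ℕ, k = ⌈u/2⌉₊ := ⟨_, rfl⟩
  obtain ⟨m, hmdef⟩ : ∃ m : ℕ, m = 2*k := ⟨_, rfl⟩
  have hku : u/2 ≤ (k:ℝ) := hkdef ▸ Nat.le_ceil _
  have hku2 : (k:ℝ) < u/2 + 1 := hkdef ▸ Nat.ceil_lt_add_one (by linarith)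
  have hmu : u ≤ (m:ℝ) := by rw [hmdef]; push_cast; linarith
  have hmu2 : (m:ℝ) ≤ u + 2 := by rw [hmdef]; push_cast; linarith
  have hm4 : 4 ≤ m := by
    have h : (4:ℝ) ≤ (m:ℝ) := le_trans hu4 hmu
    exact_mod_cast h
  have hm0 : 0 < m := by omega
  have hmR : (0:ℝ) < (m:ℝ) := by exact_mod_cast hm0
  have hdiv2 : 1/(8*M) ≤ 1/(16*ε₁) :=
    one_div_le_one_div_of_le (by positivity) (by linarith)
  have hdiv3 : 1/(8*M) ≤ 1/(8*ε₂) :=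
    one_div_le_one_div_of_le (by positivity) (by linarith)
  have hm_eps1 : (m:ℝ) ≤ 1/(4*ε₁) := by
    have e1 : 1/(4*ε₁) = 4*(1/(16*ε₁)) := by field_simp; ring
    have e2 : (3:ℝ) ≤ 1/(16*ε₁) := by
      rw [le_div_iff₀ (by positivity)]; nlinarith
    have := hmu2; rw [hudef] at this
    linarith
  have hm_eps2 : (m:ℝ) ≤ 1/(4*ε₂) := by
    have e1 : 1/(4*ε₂) = 2*(1/(8*ε₂)) := by field_simp; ring
    have e2 : (3:ℝ) ≤ 1/(8*ε₂) := by
      rw [le_div_iff₀ (by positivity)]; nlinarith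
    have := hmu2; rw [hudef] at this
    linarith
  have hm_eps1' : 4*ε₁*(m:ℝ) ≤ 1 := by
    have h := (le_div_iff₀ (by positivity : (0:ℝ) < 4*ε₁)).mp hm_eps1
    linarith
  obtain ⟨a, hadef⟩ : ∃ a : ℝ, a = γ*(1+2*ε₁) := ⟨_, rfl⟩
  have ha0 : 0 < a := by rw [hadef]; nlinarith
  have ha1 : 2*a ≤ 1 := by rw [hadef]; nlinarith
  obtain ⟨x, hxeval⟩ : ∃ x : ℕ → ℝ, ∀ j : ℕ, x j = 2*a*(Real.cos ((j:ℝ)*π/(4*(m:ℝ))))^2 :=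
    ⟨_, fun j => rfl⟩
  have hx0 : ∀ j, 0 ≤ x j := by
    intro j; rw [hxeval]; positivity
  have hx1 : ∀ j, x j ≤ 1 := by
    intro j; rw [hxeval]
    nlinarith [Real.cos_sq_le_one ((j:ℝ)*π/(4*(m:ℝ)))]
  have hang_nonneg : ∀ j : ℕ, 0 ≤ (j:ℝ)*π/(4*(m:ℝ)) := by
    intro j; positivity
  have hang_le : ∀ j : ℕ, j ≤ 2*m → (j:ℝ)*π/(4*(m:ℝ)) ≤ π/2 := by
    intro j hj
    rw [div_le_div_iff₀ (by positivity) (by norm_num)]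
    have hc : (j:ℝ) ≤ 2*(m:ℝ) := by exact_mod_cast hj
    nlinarith [Real.pi_pos]
  have hcos_nonneg : ∀ j : ℕ, j ≤ 2*m → 0 ≤ Real.cos ((j:ℝ)*π/(4*(m:ℝ))) := by
    intro j hj
    exact Real.cos_nonneg_of_mem_Icc ⟨by linarith [hang_nonneg j, Real.pi_pos], hang_le j hj⟩
  have hx_anti : ∀ j j' : ℕ, j ≤ j' → j' ≤ 2*m → x j' ≤ x j := by
    intro j j' hjj hj'
    have hc : Real.cos ((j':ℝ)*π/(4*(m:ℝ))) ≤ Real.cos ((j:ℝ)*π/(4*(m:ℝ))) := by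
      apply Real.cos_le_cos_of_nonneg_of_le_pi (hang_nonneg j)
      · linarith [hang_le j' hj', Real.pi_pos]
      · have hle : (j:ℝ) ≤ (j':ℝ) := by exact_mod_cast hjj
        apply div_le_div_of_nonneg_right ?_ (by positivity : (0:ℝ) ≤ 4*(m:ℝ))
        · exact mul_le_mul_of_nonneg_right hle Real.pi_pos.le
    rw [hxeval, hxeval]
    have h2 := pow_le_pow_left₀ (hcos_nonneg j' hj') hc 2
    nlinarith [ha0]
  have hx_strict : ∀ j j' : ℕ, j < j' → j' ≤ 2*m → x j' < x j := by
    intro j j' hjj hj'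
    have hmem : ∀ i : ℕ, i ≤ 2*m → (i:ℝ)*π/(4*(m:ℝ)) ∈ Set.Icc 0 π := by
      intro i hi
      exact ⟨hang_nonneg i, by linarith [hang_le i hi, Real.pi_pos]⟩
    have hc : Real.cos ((j':ℝ)*π/(4*(m:ℝ))) < Real.cos ((j:ℝ)*π/(4*(m:ℝ))) := by
      apply Real.strictAntiOn_cos (hmem j (by omega)) (hmem j' hj')
      have hlt : (j:ℝ) < (j':ℝ) := by exact_mod_cast hjj
      have hlt : (j:ℝ) < (j':ℝ) := by exact_mod_cast hjj
      apply div_lt_div_of_pos_right ?_ (by positivity : (0:ℝ) < 4*(m:ℝ))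
      exact mul_lt_mul_of_pos_right hlt Real.pi_pos
    rw [hxeval, hxeval]
    have h2 := pow_lt_pow_left₀ hc (hcos_nonneg j' hj') two_ne_zero
    nlinarith [ha0]
  -- value identities
  have hxcos : ∀ j : ℕ, x j = a*(1 + Real.cos ((j:ℝ)*π/(2*(m:ℝ)))) := by
    intro j
    rw [hxeval, Real.cos_sq]
    have harg : 2*((j:ℝ)*π/(4*(m:ℝ))) = (j:ℝ)*π/(2*(m:ℝ)) := by
      field_simp; ring
    rw [harg]; ring
  have hxm : x m = a := by
    rw [hxcos]
    have harg : (m:ℝ)*π/(2*(m:ℝ)) = π/2 := by field_simp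
    rw [harg, Real.cos_pi_div_two]; ring
  have hxm1 : x (m+1) = a*(1 - Real.sin (π/(2*(m:ℝ)))) := by
    rw [hxcos]
    have harg : ((m+1:ℕ):ℝ)*π/(2*(m:ℝ)) = π/(2*(m:ℝ)) + π/2 := by
      push_cast; field_simp; ring
    rw [harg, Real.cos_add_pi_div_two]; ring
  have hxm1' : x (m-1) = a*(1 + Real.sin (π/(2*(m:ℝ)))) := by
    rw [hxcos]
    have harg : ((m-1:ℕ):ℝ)*π/(2*(m:ℝ)) = π/2 - π/(2*(m:ℝ)) := by
      push_cast [Nat.cast_sub (by omega : 1 ≤ m)]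
      field_simp
    rw [harg, Real.cos_pi_div_two_sub]
  have hxm2 : x (m+2) = a*(1 - Real.sin (π/(m:ℝ))) := by
    rw [hxcos]
    have harg : ((m+2:ℕ):ℝ)*π/(2*(m:ℝ)) = π/(m:ℝ) + π/2 := by
      push_cast; field_simp; ring
    rw [harg, Real.cos_add_pi_div_two]; ring
  have hxm2' : x (m-2) = a*(1 + Real.sin (π/(m:ℝ))) := by
    rw [hxcos]
    have harg : ((m-2:ℕ):ℝ)*π/(2*(m:ℝ)) = π/2 - π/(m:ℝ) := by
      push_cast [Nat.cast_sub (by omega : 2 ≤ m)]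
      field_simp
    rw [harg, Real.cos_pi_div_two_sub]
  -- sin facts
  have hs1pos : 0 < Real.sin (π/(2*(m:ℝ))) := by
    apply Real.sin_pos_of_pos_of_lt_pi (by positivity)
    rw [div_lt_iff₀ (by positivity)]
    nlinarith [Real.pi_pos]
  have hs2pos : 0 < Real.sin (π/(m:ℝ)) := by
    apply Real.sin_pos_of_pos_of_lt_pi (by positivity)
    rw [div_lt_iff₀ (by positivity)]
    nlinarith [Real.pi_pos]
  have hs1ge : 1/(m:ℝ) ≤ Real.sin (π/(2*(m:ℝ))) := by
    have h := Real.mul_le_sin (x := π/(2*(m:ℝ))) (by positivity) ?hle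
    case hle =>
      rw [div_le_div_iff₀ (by positivity) (by norm_num)]
      nlinarith [Real.pi_pos]
    calc 1/(m:ℝ) = 2/π * (π/(2*(m:ℝ))) := by
          field_simp
      _ ≤ _ := h
  have h4e1 : 4*ε₁ ≤ 1/(m:ℝ) := by
    rw [le_div_iff₀ hmR]
    linarith [hm_eps1']
  have hs14 : 4*ε₁ ≤ Real.sin (π/(2*(m:ℝ))) := le_trans h4e1 hs1ge
  refine ⟨m, fun i => x (2*m+1-2*((i+1)/2)), fun i => x (2*m-2*(i/2)), hm0,
    ?_, ?_, ?_, ?_, ?_, ?_, ?_, ?_, ?_, ?_, hm_eps2, ?_⟩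
  · intro i _ _
    exact ⟨hx0 _, hx1 _, hx0 _, hx1 _⟩
  · -- power sums
    intro t ht
    have hA : (∑ i ∈ Finset.Icc 1 (2*m), (x (2*m+1-2*((i+1)/2))) ^ t)
        = 2 * ∑ k ∈ Icc 1 m, (x (2*m+1-2*k))^t :=
      sum_pair_shift (fun k => (x (2*m+1-2*k))^t) m
    have hB : (∑ i ∈ Finset.Icc 1 (2*m), (x (2*m-2*(i/2))) ^ t)
        = (x (2*m))^t + (x 0)^t + 2 * ∑ k ∈ Icc 1 (m-1), (x (2*m-2*k))^t := by
      have h := sum_pair_shift' (fun k => (x (2*m-2*k))^t) m (by omega)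
      simpa using h
    have hkey : ∑ j ∈ range (2*m+1), ((-1:ℝ)^j * (if j = 0 ∨ j = 2*m then (1:ℝ) else 2))
        * (x j)^t = 0 := by
      calc ∑ j ∈ range (2*m+1), ((-1:ℝ)^j * (if j = 0 ∨ j = 2*m then (1:ℝ) else 2)) * (x j)^t
          = ∑ j ∈ range (2*m+1), ((-1:ℝ)^j * (if j = 0 ∨ j = 2*m then (1:ℝ) else 2))
            * (2*a*(Real.cos ((j:ℝ)*π/(4*(m:ℝ))))^2)^t :=
            Finset.sum_congr rfl (fun j _ => by rw [hxeval j])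
        _ = 0 := key_sum m hm0 a t (by omega)
    have hsplit := sum_range_even_odd
      (fun j => ((-1:ℝ)^j * (if j = 0 ∨ j = 2*m then (1:ℝ) else 2)) * (x j)^t) m
    have he : ∑ k ∈ range (m+1), ((-1:ℝ)^(2*k) * (if 2*k = 0 ∨ 2*k = 2*m then (1:ℝ) else 2))
          * (x (2*k))^t
        = ∑ k ∈ range (m+1), (if k = 0 ∨ k = m then (1:ℝ) else 2) * (x (2*k))^t := by
      refine Finset.sum_congr rfl fun k _ => ?_
      have h1 : (-1:ℝ)^(2*k) = 1 := Even.neg_one_pow ⟨k, by ring⟩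
      have h2 : (2*k = 0 ∨ 2*k = 2*m) ↔ (k = 0 ∨ k = m) := by omega
      rw [h1, one_mul, if_congr h2 rfl rfl]
    have ho : ∑ k ∈ range m, ((-1:ℝ)^(2*k+1) * (if 2*k+1 = 0 ∨ 2*k+1 = 2*m then (1:ℝ) else 2))
          * (x (2*k+1))^t
        = ∑ k ∈ range m, -(2 * (x (2*k+1))^t) := by
      refine Finset.sum_congr rfl fun k _ => ?_
      have h1 : (-1:ℝ)^(2*k+1) = -1 := Odd.neg_one_pow ⟨k, by ring⟩
      have h2 : ¬(2*k+1 = 0 ∨ 2*k+1 = 2*m) := by omega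
      rw [h1, if_neg h2]; ring
    rw [he, ho, Finset.sum_neg_distrib, ← Finset.mul_sum] at hsplit
    have hwes : ∑ k ∈ range (m+1), (if k = 0 ∨ k = m then (1:ℝ) else 2) * (x (2*k))^t
        = (x 0)^t + (x (2*m))^t + 2 * ∑ k ∈ Icc 1 (m-1), (x (2*k))^t := by
      have h := weighted_even_sum (fun k => (x (2*k))^t) m (by omega)
      simpa using h
    have hrefl : ∑ k ∈ Icc 1 (m-1), (x (2*m-2*k))^t = ∑ k ∈ Icc 1 (m-1), (x (2*k))^t := by
      calc ∑ k ∈ Icc 1 (m-1), (x (2*m-2*k))^t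
          = ∑ k ∈ Icc 1 (m-1), (x (2*((m-1)+1-k)))^t :=
            Finset.sum_congr rfl fun k hk => by
              have h := Finset.mem_Icc.mp hk
              exact congrArg (fun n => (x n)^t) (by omega)
        _ = _ := sum_Icc_reflect (fun k => (x (2*k))^t) (m-1)
    have hodd : ∑ k ∈ Icc 1 m, (x (2*m+1-2*k))^t = ∑ k ∈ range m, (x (2*k+1))^t := by
      calc ∑ k ∈ Icc 1 m, (x (2*m+1-2*k))^t
          = ∑ k ∈ Icc 1 m, (x (2*(m-k)+1))^t :=
            Finset.sum_congr rfl fun k hk => by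
              have h := Finset.mem_Icc.mp hk
              exact congrArg (fun n => (x n)^t) (by omega)
        _ = _ := sum_Icc_to_range (fun k => (x (2*k+1))^t) m
    rw [hA, hB, hrefl, hodd]
    linarith [hsplit, hkey, hwes]
  · -- p monotone
    intro i j hi hij hj
    exact hx_anti _ _ (by omega) (by omega)
  · -- p m < γ(1-2ε₁)
    have hidx : 2*m+1-2*((m+1)/2) = m+1 := by omega
    show x (2*m+1-2*((m+1)/2)) < γ * (1 - 2*ε₁)
    rw [hidx, hxm1, hadef]
    nlinarith [mul_pos hγ (mul_pos hε₁ hs1pos), mul_le_mul_of_nonneg_left hs14 hγ.le]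
  · -- γ(1+2ε₁) < p (m+1)
    have hidx : 2*m+1-2*((m+1+1)/2) = m-1 := by omega
    show γ * (1 + 2*ε₁) < x (2*m+1-2*((m+1+1)/2))
    rw [hidx, hxm1', ← hadef]
    nlinarith [ha0, hs1pos]
  · -- q monotone
    intro i j hi hij hj
    exact hx_anti _ _ (by omega) (by omega)
  · -- q (m-1) < γ(1+2ε₁)
    have hidx : 2*m-2*((m-1)/2) = m+2 := by omega
    show x (2*m-2*((m-1)/2)) < γ * (1 + 2*ε₁)
    rw [hidx, hxm2, ← hadef]
    nlinarith [ha0, hs2pos]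
  · -- q m
    have hidx : 2*m-2*(m/2) = m := by omega
    show x (2*m-2*(m/2)) = γ * (1 + 2*ε₁)
    rw [hidx, hxm, hadef]
  · -- q (m+1)
    have hidx : 2*m-2*((m+1)/2) = m := by omega
    show x (2*m-2*((m+1)/2)) = γ * (1 + 2*ε₁)
    rw [hidx, hxm, hadef]
  · -- q (m+2)
    have hidx : 2*m-2*((m+2)/2) = m-2 := by omega
    show γ * (1 + 2*ε₁) < x (2*m-2*((m+2)/2))
    rw [hidx, hxm2', ← hadef]
    nlinarith [ha0, hs2pos]
  · -- lower bound
    rw [hMdef', ← hudef]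
    exact hmu
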